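/- arXiv:1506.06352 — 2 statements merged into one kernel-verified Lean document; each statement's English description precedes it below -/
import Mathlib

section
/- Let k be a field whose characteristic does not divide r. Then the Dynkin–Specht–Wever element e_r = (1/r)(1 − γ_2)(1 − γ_3)⋯(1 − γ_r) in kΣ_r, where for 2 ≤ i ≤ r, γ_i denotes the descending i-cycle (i ⋯ 2 1), is a Lie idempotent: e_r² = e_r and T^{n,r}·e_r = L^{n,r}. -/
open MulOpposite

noncomputable section

variable (k : Type*) [Field k] (n r : ℕ)

/-- `T^{n,r} = (k^n)^{⊗r}`, the `r`-th tensor power of `k^n`. -/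
abbrev TP := TensorPower k r (Fin n → k)

/-- The place permutation `v_1 ⊗ ⋯ ⊗ v_r ↦ v_{σ(1)} ⊗ ⋯ ⊗ v_{σ(r)}` (a right action). -/
def permAct (σ : Equiv.Perm (Fin r)) : Module.End k (TP k n r) :=
  (PiTensorProduct.reindex k (fun _ : Fin r => (Fin n → k)) σ⁻¹).toLinearMap

lemma permAct_tprod (σ : Equiv.Perm (Fin r)) (f : Fin r → (Fin n → k)) :
    permAct k n r σ (PiTensorProduct.tprod k f) = PiTensorProduct.tprod k (f ∘ σ) := by
  simp [permAct, PiTensorProduct.reindex_tprod]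
  rfl

/-- The right action of the group algebra `kΣ_r` on `T^{n,r}`,
as an algebra map into `(End T)ᵐᵒᵖ`. -/
def rho : MonoidAlgebra k (Equiv.Perm (Fin r)) →ₐ[k] (Module.End k (TP k n r))ᵐᵒᵖ :=
  MonoidAlgebra.lift k _ (Equiv.Perm (Fin r))
    { toFun := fun σ => op (permAct k n r σ)
      map_one' := by
        apply congrArg op
        apply PiTensorProduct.ext
        apply MultilinearMap.ext
        intro f
        simp [permAct_tprod]
      map_mul' := fun σ τ => by
        rw [← op_mul]
        apply congrArg op
        apply PiTensorProduct.ext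
        apply MultilinearMap.ext
        intro f
        simp only [LinearMap.compMultilinearMap_apply, permAct_tprod, Module.End.mul_apply]
        rw [Equiv.Perm.coe_mul]
        rfl }

/-- The right action of `x ∈ kΣ_r` on `T^{n,r}`. -/
def ract (x : MonoidAlgebra k (Equiv.Perm (Fin r))) : Module.End k (TP k n r) :=
  (rho k n r x).unop

lemma ract_mul (x y : MonoidAlgebra k (Equiv.Perm (Fin r))) :
    ract k n r (x * y) = ract k n r y * ract k n r x := by
  simp [ract, map_mul]

/-- The diagonal action of `g ∈ GL_n(k)` on `T^{n,r}`. -/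
def glAct (g : GL (Fin n) k) : Module.End k (TP k n r) :=
  PiTensorProduct.map (fun _ => (g : Matrix (Fin n) (Fin n) k).mulVecLin)

attribute [local instance 100] LieRing.ofAssociativeRing

/-- The free Lie algebra `L(k^n)`: the Lie subalgebra of the tensor algebra
generated by `k^n`. -/
def freeLie : LieSubalgebra k (TensorAlgebra k (Fin n → k)) :=
  LieSubalgebra.lieSpan k _ (Set.range (TensorAlgebra.ι k))

/-- The canonical (injective) linear map from the `r`-th tensor power to the
tensor algebra. -/
def iotaR : TP k n r →ₗ[k] TensorAlgebra k (Fin n → k) :=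
  TensorPower.toTensorAlgebra

/-- `L^{n,r} = L(k^n) ∩ T^{n,r}`: the homogeneous Lie polynomials of degree `r`,
viewed inside the `r`-th tensor power. -/
def Lnr : Submodule k (TP k n r) :=
  Submodule.comap (iotaR k n r) (freeLie k n).toSubmodule

/-- The algebra endomorphism of the tensor algebra induced by `g ∈ GL_n(k)`. -/
def glTA (g : GL (Fin n) k) :
    TensorAlgebra k (Fin n → k) →ₐ[k] TensorAlgebra k (Fin n → k) :=
  TensorAlgebra.lift k ((TensorAlgebra.ι k) ∘ₗ (g : Matrix (Fin n) (Fin n) k).mulVecLin)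

lemma iotaR_glAct (g : GL (Fin n) k) :
    iotaR k n r ∘ₗ glAct k n r g = (glTA k n g).toLinearMap ∘ₗ iotaR k n r := by
  apply PiTensorProduct.ext
  apply MultilinearMap.ext
  intro f
  simp only [LinearMap.compMultilinearMap_apply, LinearMap.coe_comp, Function.comp_apply,
    glAct, PiTensorProduct.map_tprod, AlgHom.toLinearMap_apply]
  rw [iotaR, TensorPower.toTensorAlgebra_tprod, TensorPower.toTensorAlgebra_tprod,
    TensorAlgebra.tprod_apply, TensorAlgebra.tprod_apply, map_list_prod, List.map_ofFn]
  congr 1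
  congr 1
  funext i
  simp [glTA, TensorAlgebra.lift_ι_apply]

lemma glTA_freeLie (g : GL (Fin n) k) :
    ∀ x ∈ freeLie k n, glTA k n g x ∈ freeLie k n := by
  intro x hx
  have h : freeLie k n ≤ LieSubalgebra.comap (glTA k n g).toLieHom (freeLie k n) := by
    rw [freeLie, LieSubalgebra.lieSpan_le]
    rintro y ⟨v, rfl⟩
    show glTA k n g (TensorAlgebra.ι k v) ∈ freeLie k n
    rw [glTA, TensorAlgebra.lift_ι_apply]
    exact LieSubalgebra.subset_lieSpan ⟨_, rfl⟩
  exact h hx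

lemma glAct_mem_Lnr (g : GL (Fin n) k) :
    ∀ x ∈ Lnr k n r, glAct k n r g x ∈ Lnr k n r := by
  intro x hx
  show iotaR k n r (glAct k n r g x) ∈ (freeLie k n).toSubmodule
  have := congrArg (fun F : TP k n r →ₗ[k] TensorAlgebra k (Fin n → k) => F x)
    (iotaR_glAct k n r g)
  simp only [LinearMap.coe_comp, Function.comp_apply] at this
  rw [this]
  exact glTA_freeLie k n g _ hx

/-- `Φ_e(g)`: the action of `g ∈ GL_n(k)` on `L^{n,r}`. -/
def glRes (g : GL (Fin n) k) : Module.End k ↥(Lnr k n r) :=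
  (glAct k n r g).restrict (glAct_mem_Lnr k n r g)

lemma ract_mem_Lnr (e : MonoidAlgebra k (Equiv.Perm (Fin r)))
    (hLie : LinearMap.range (ract k n r e) = Lnr k n r)
    (b : MonoidAlgebra k (Equiv.Perm (Fin r))) :
    ∀ x ∈ Lnr k n r, ract k n r (e * b * e) x ∈ Lnr k n r := by
  intro x _
  rw [← hLie]
  rw [show e * b * e = (e * b) * e from rfl, ract_mul]
  exact ⟨ract k n r (e * b) x, rfl⟩

/-- `Ψ_e(ebe)`: the action of `e*b*e ∈ e kΣ_r e` on `L^{n,r}`. -/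
def psiRes (e : MonoidAlgebra k (Equiv.Perm (Fin r)))
    (hLie : LinearMap.range (ract k n r e) = Lnr k n r)
    (b : MonoidAlgebra k (Equiv.Perm (Fin r))) : Module.End k ↥(Lnr k n r) :=
  (ract k n r (e * b * e)).restrict (ract_mem_Lnr k n r e hLie b)

/-- `End_{GL_n(k)}(L^{n,r})`. -/
def EndGL : Set (Module.End k ↥(Lnr k n r)) :=
  {f | ∀ g : GL (Fin n) k, f ∘ₗ glRes k n r g = glRes k n r g ∘ₗ f}

/-- `End_{e kΣ_r e}(L^{n,r})`. -/
def EndeBe (e : MonoidAlgebra k (Equiv.Perm (Fin r)))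
    (hLie : LinearMap.range (ract k n r e) = Lnr k n r) :
    Set (Module.End k ↥(Lnr k n r)) :=
  {f | ∀ b, f ∘ₗ psiRes k n r e hLie b = psiRes k n r e hLie b ∘ₗ f}

/-- `Φ_e(k GL_n(k))`: the image of the group algebra of `GL_n(k)` in
`End_k(L^{n,r})`, i.e. the `k`-span of the operators coming from group elements. -/
def PhiImage : Set (Module.End k ↥(Lnr k n r)) :=
  ↑(Submodule.span k (Set.range (glRes k n r)))

/-- The triple `(k GL_n(k), L^{n,r}, e kΣ_r e)` satisfies Schur-Weyl duality. -/
def LieSWD (e : MonoidAlgebra k (Equiv.Perm (Fin r)))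
    (hLie : LinearMap.range (ract k n r e) = Lnr k n r) : Prop :=
  PhiImage k n r = EndeBe k n r e hLie ∧
  Set.range (psiRes k n r e hLie) = EndGL k n r

end

noncomputable section

variable (k : Type*) [Field k] (r : ℕ)

/-- The Dynkin-Specht-Wever element
`e_r = (1/r)(1 - γ_2)(1 - γ_3) ⋯ (1 - γ_r)`, where `γ_i` is the descending `i`-cycle
`(i ⋯ 2 1)`.  (In the `0`-indexed encoding, the descending `(i+1)`-cycle is
`(Fin.cycleRange i)⁻¹` for `i = 1, …, r-1`.) -/
def dsw : MonoidAlgebra k (Equiv.Perm (Fin r)) :=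
  (r : k)⁻¹ • (((List.finRange r).drop 1).map
    (fun i => (1 : MonoidAlgebra k (Equiv.Perm (Fin r))) -
      MonoidAlgebra.of k (Equiv.Perm (Fin r)) ((Fin.cycleRange i)⁻¹))).prod

end


set_option maxHeartbeats 1000000

noncomputable section DSWAux

variable (k : Type*) [Field k] (n : ℕ)

attribute [local instance 100] LieRing.ofAssociativeRing

/-- The augmentation of the tensor algebra. -/
def epsA : TensorAlgebra k (Fin n → k) →ₐ[k] k := TensorAlgebra.algebraMapInv

lemma epsA_ι (v : Fin n → k) : epsA k n (TensorAlgebra.ι k v) = 0 := by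
  simp [epsA, TensorAlgebra.algebraMapInv]

/-- Generic construction: a right-action-style operator on pairs. -/
def genOp (B : (Fin n → k) →ₗ[k]
    (TensorAlgebra k (Fin n → k) × TensorAlgebra k (Fin n → k)) →ₗ[k] TensorAlgebra k (Fin n → k)) :
    (Fin n → k) →ₗ[k]
      (Module.End k (TensorAlgebra k (Fin n → k) × TensorAlgebra k (Fin n → k)))ᵐᵒᵖ where
  toFun v := op
    { toFun := fun p => (p.1 * TensorAlgebra.ι k v, B v p)
      map_add' := fun p q => by
        simp [Prod.ext_iff, add_mul]
      map_smul' := fun c p => by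
        simp [Prod.ext_iff, smul_mul_assoc] }
  map_add' v w := by
    rw [← op_add]
    refine congrArg op (LinearMap.ext fun p => ?_)
    simp [Prod.ext_iff, mul_add]
  map_smul' c v := by
    rw [← op_smul]
    refine congrArg op (LinearMap.ext fun p => ?_)
    simp [Prod.ext_iff, mul_smul_comm]

def genHom (B : (Fin n → k) →ₗ[k]
    (TensorAlgebra k (Fin n → k) × TensorAlgebra k (Fin n → k)) →ₗ[k] TensorAlgebra k (Fin n → k)) :
    TensorAlgebra k (Fin n → k) →ₐ[k]
      (Module.End k (TensorAlgebra k (Fin n → k) × TensorAlgebra k (Fin n → k)))ᵐᵒᵖ :=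
  TensorAlgebra.lift k (genOp k n B)

lemma genHom_fst (B) (x : TensorAlgebra k (Fin n → k)) :
    ∀ p : TensorAlgebra k (Fin n → k) × TensorAlgebra k (Fin n → k),
      ((genHom k n B x).unop p).1 = p.1 * x := by
  induction x using TensorAlgebra.induction with
  | algebraMap c =>
    intro p
    rw [AlgHom.commutes]
    simp [MulOpposite.algebraMap_apply, Module.algebraMap_end_apply, Algebra.smul_def,
      Algebra.commutes]
  | ι v =>
    intro p
    simp [genHom, genOp, TensorAlgebra.lift_ι_apply]
  | mul x y hx hy =>
    intro p
    rw [map_mul, unop_mul, Module.End.mul_apply, hy, hx, mul_assoc]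
  | add x y hx hy =>
    intro p
    rw [map_add, unop_add, LinearMap.add_apply]
    simp only [Prod.fst_add, hx, hy, mul_add]

def genMap (B : (Fin n → k) →ₗ[k]
    (TensorAlgebra k (Fin n → k) × TensorAlgebra k (Fin n → k)) →ₗ[k] TensorAlgebra k (Fin n → k)) :
    TensorAlgebra k (Fin n → k) →ₗ[k] TensorAlgebra k (Fin n → k) where
  toFun x := ((genHom k n B x).unop (1, 0)).2
  map_add' x y := by
    show ((genHom k n B (x + y)).unop (1, 0)).2 = _
    rw [map_add, unop_add, LinearMap.add_apply]; rfl
  map_smul' c x := by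
    show ((genHom k n B (c • x)).unop (1, 0)).2 = _
    rw [map_smul, unop_smul, LinearMap.smul_apply]; rfl

lemma genMap_algebraMap (B) (c : k) :
    genMap k n B (algebraMap k _ c) = 0 := by
  show ((genHom k n B (algebraMap k _ c)).unop (1, 0)).2 = 0
  rw [AlgHom.commutes]
  simp [MulOpposite.algebraMap_apply, Module.algebraMap_end_apply]

lemma genMap_one (B) : genMap k n B 1 = 0 := by
  have := genMap_algebraMap k n B 1
  rwa [map_one] at this

lemma genMap_ι (B) (v : Fin n → k) : genMap k n B (TensorAlgebra.ι k v) = B v (1, 0) := by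
  show ((genHom k n B (TensorAlgebra.ι k v)).unop (1, 0)).2 = B v (1, 0)
  simp [genHom, genOp, TensorAlgebra.lift_ι_apply]

lemma genMap_mul_ι (B) (x : TensorAlgebra k (Fin n → k)) (v : Fin n → k) :
    genMap k n B (x * TensorAlgebra.ι k v) = B v (x, genMap k n B x) := by
  show ((genHom k n B (x * TensorAlgebra.ι k v)).unop (1, 0)).2 = _
  rw [map_mul, unop_mul, Module.End.mul_apply]
  have h1 : (genHom k n B (TensorAlgebra.ι k v)).unop = (genOp k n B v).unop :=
    congrArg _ (TensorAlgebra.lift_ι_apply _ _)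
  rw [h1]
  have h2 : (genHom k n B x).unop (1, 0) = (x, genMap k n B x) := by
    refine Prod.ext ?_ rfl
    rw [genHom_fst, one_mul]
  rw [h2]
  rfl


/-- second component generator for the Dynkin map. -/
def Bth : (Fin n → k) →ₗ[k]
    (TensorAlgebra k (Fin n → k) × TensorAlgebra k (Fin n → k)) →ₗ[k]
      TensorAlgebra k (Fin n → k) where
  toFun v :=
    { toFun := fun p => ⁅p.2, TensorAlgebra.ι k v⁆ + epsA k n p.1 • TensorAlgebra.ι k v
      map_add' := fun p q => by
        simp only [Prod.snd_add, add_lie, Prod.fst_add, map_add, add_smul]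
        abel
      map_smul' := fun c p => by
        simp only [Prod.smul_snd, smul_lie, Prod.smul_fst, map_smul, smul_eq_mul,
          RingHom.id_apply, mul_smul, ← smul_add] }
  map_add' v w := by
    refine LinearMap.ext fun p => ?_
    simp only [map_add, lie_add, smul_add, LinearMap.coe_mk, AddHom.coe_mk, LinearMap.add_apply]
    abel
  map_smul' c v := by
    refine LinearMap.ext fun p => ?_
    simp only [map_smul, Ring.lie_def, LinearMap.coe_mk, AddHom.coe_mk,
      RingHom.id_apply, LinearMap.smul_apply, mul_smul_comm, smul_mul_assoc]
    module

/-- second component generator for the Euler (degree) operator. -/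
def Bnn : (Fin n → k) →ₗ[k]
    (TensorAlgebra k (Fin n → k) × TensorAlgebra k (Fin n → k)) →ₗ[k]
      TensorAlgebra k (Fin n → k) where
  toFun v :=
    { toFun := fun p => p.2 * TensorAlgebra.ι k v + p.1 * TensorAlgebra.ι k v
      map_add' := fun p q => by
        simp only [Prod.snd_add, Prod.fst_add, add_mul]
        abel
      map_smul' := fun c p => by
        simp only [Prod.smul_snd, Prod.smul_fst, smul_mul_assoc, RingHom.id_apply, ← smul_add] }
  map_add' v w := by
    refine LinearMap.ext fun p => ?_
    simp only [map_add, mul_add, LinearMap.coe_mk, AddHom.coe_mk, LinearMap.add_apply]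
    abel
  map_smul' c v := by
    refine LinearMap.ext fun p => ?_
    simp only [map_smul, mul_smul_comm, ← smul_add, LinearMap.coe_mk, AddHom.coe_mk,
      RingHom.id_apply, LinearMap.smul_apply]

/-- The Dynkin left-bracketing operator. -/
def Th : TensorAlgebra k (Fin n → k) →ₗ[k] TensorAlgebra k (Fin n → k) := genMap k n (Bth k n)

/-- The Euler (degree) operator. -/
def Nn : TensorAlgebra k (Fin n → k) →ₗ[k] TensorAlgebra k (Fin n → k) := genMap k n (Bnn k n)

lemma Th_ι (v : Fin n → k) : Th k n (TensorAlgebra.ι k v) = TensorAlgebra.ι k v := by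
  rw [Th, genMap_ι]
  simp [Bth]

lemma Nn_ι (v : Fin n → k) : Nn k n (TensorAlgebra.ι k v) = TensorAlgebra.ι k v := by
  rw [Nn, genMap_ι]
  simp [Bnn]

lemma Th_mul_ι (x : TensorAlgebra k (Fin n → k)) (v : Fin n → k) :
    Th k n (x * TensorAlgebra.ι k v) =
      ⁅Th k n x, TensorAlgebra.ι k v⁆ + epsA k n x • TensorAlgebra.ι k v := by
  rw [Th, genMap_mul_ι]
  rfl

lemma Nn_mul_ι (x : TensorAlgebra k (Fin n → k)) (v : Fin n → k) :
    Nn k n (x * TensorAlgebra.ι k v) = Nn k n x * TensorAlgebra.ι k v + x * TensorAlgebra.ι k v := by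
  rw [Nn, genMap_mul_ι]
  rfl

lemma Th_mem_freeLie (x : TensorAlgebra k (Fin n → k)) : Th k n x ∈ freeLie k n := by
  set U : Submodule k (TensorAlgebra k (Fin n → k)) :=
    (freeLie k n).toSubmodule.comap (Th k n) with hU
  have hι : ∀ v : Fin n → k, TensorAlgebra.ι k v ∈ freeLie k n := fun v =>
    LieSubalgebra.subset_lieSpan ⟨v, rfl⟩
  have hU1 : (1 : TensorAlgebra k (Fin n → k)) ∈ U := by
    have : Th k n 1 = 0 := genMap_one k n _
    simp [hU, Submodule.mem_comap, this]
  have hUmul : ∀ (v : Fin n → k), ∀ x ∈ U, x * TensorAlgebra.ι k v ∈ U := by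
    intro v x hx
    simp only [hU, Submodule.mem_comap] at hx ⊢
    rw [Th_mul_ι]
    exact Submodule.add_mem _ ((freeLie k n).lie_mem hx (hι v))
      (Submodule.smul_mem _ _ (hι v))
  have main : ∀ x : TensorAlgebra k (Fin n → k), ∀ a ∈ U, a * x ∈ U := by
    intro x
    induction x using TensorAlgebra.induction with
    | algebraMap c =>
      intro a ha
      rw [← Algebra.commutes, ← Algebra.smul_def]
      exact Submodule.smul_mem _ _ ha
    | ι v => exact fun a ha => hUmul v a ha
    | mul x y hx hy =>
      intro a ha
      rw [← mul_assoc]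
      exact hy _ (hx a ha)
    | add x y hx hy =>
      intro a ha
      rw [mul_add]
      exact Submodule.add_mem _ (hx a ha) (hy a ha)
  have := main x 1 hU1
  rwa [one_mul] at this

lemma lieC_smul (c : k) (x y : TensorAlgebra k (Fin n → k)) : ⁅x, c • y⁆ = c • ⁅x, y⁆ := by
  simp only [Ring.lie_def, mul_smul_comm, smul_mul_assoc, smul_sub]

lemma lieC_smul' (c : k) (x y : TensorAlgebra k (Fin n → k)) : ⁅c • x, y⁆ = c • ⁅x, y⁆ := by
  simp only [Ring.lie_def, mul_smul_comm, smul_mul_assoc, smul_sub]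

/-- The Lie subalgebra of elements where the Dynkin operator behaves well. -/
def master : LieSubalgebra k (TensorAlgebra k (Fin n → k)) where
  carrier := {b | epsA k n b = 0 ∧ Th k n b = Nn k n b ∧
    (∀ x, Th k n (x * b) = ⁅Th k n x, b⁆ + epsA k n x • Th k n b) ∧
    (∀ x, Nn k n (x * b) = Nn k n x * b + x * Nn k n b)}
  zero_mem' := ⟨map_zero _, by simp, fun x => by simp, fun x => by simp⟩
  add_mem' := by
    rintro b₁ b₂ ⟨h1e, h1tn, h1t, h1n⟩ ⟨h2e, h2tn, h2t, h2n⟩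
    refine ⟨by rw [map_add, h1e, h2e, add_zero],
      by rw [map_add, map_add, h1tn, h2tn], fun x => ?_, fun x => ?_⟩
    · rw [mul_add, map_add, h1t x, h2t x, map_add, lie_add, smul_add]
      abel
    · simp only [mul_add, map_add, h1n x, h2n x, add_mul]
      abel
  smul_mem' := by
    rintro c b ⟨he, htn, ht, hn⟩
    refine ⟨by rw [map_smul, he, smul_zero],
      by rw [map_smul, map_smul, htn], fun x => ?_, fun x => ?_⟩
    · simp only [mul_smul_comm, map_smul, ht x, lieC_smul, smul_add]
      try module
    · simp only [mul_smul_comm, map_smul, hn x, smul_add, smul_mul_assoc]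
      try module
  lie_mem' := by
    intro b₁ b₂ hb₁ hb₂
    obtain ⟨h1e, h1tn, h1t, h1n⟩ := hb₁
    obtain ⟨h2e, h2tn, h2t, h2n⟩ := hb₂
    have key2 : Th k n ⁅b₁, b₂⁆ = ⁅Th k n b₁, b₂⁆ - ⁅Th k n b₂, b₁⁆ := by
      rw [Ring.lie_def, map_sub, h2t b₁, h1t b₂, h1e, h2e, zero_smul, zero_smul, add_zero,
        add_zero]
    have keyN : Nn k n ⁅b₁, b₂⁆ =
        Nn k n b₁ * b₂ + b₁ * Nn k n b₂ - (Nn k n b₂ * b₁ + b₂ * Nn k n b₁) := by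
      rw [Ring.lie_def, map_sub, h2n b₁, h1n b₂]
    refine ⟨?_, ?_, fun x => ?_, fun x => ?_⟩
    · rw [Ring.lie_def, map_sub, map_mul, map_mul, h1e, h2e]
      ring
    · rw [key2, keyN, h1tn, h2tn, Ring.lie_def, Ring.lie_def]
      abel
    · have e1 : epsA k n (x * b₁) = 0 := by rw [map_mul, h1e, mul_zero]
      have e2 : epsA k n (x * b₂) = 0 := by rw [map_mul, h2e, mul_zero]
      have expand : x * ⁅b₁, b₂⁆ = x * b₁ * b₂ - x * b₂ * b₁ := by
        rw [Ring.lie_def]; noncomm_ring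
      rw [expand, map_sub, h2t (x * b₁), h1t (x * b₂), e1, e2, zero_smul, zero_smul, add_zero,
        add_zero, h1t x, h2t x, key2]
      rw [add_lie, add_lie, lieC_smul', lieC_smul', smul_sub]
      have jac : ⁅⁅Th k n x, b₁⁆, b₂⁆ - ⁅⁅Th k n x, b₂⁆, b₁⁆ = ⁅Th k n x, ⁅b₁, b₂⁆⁆ := by
        simp only [Ring.lie_def]; noncomm_ring
      rw [← jac]
      abel
    · have expand : x * ⁅b₁, b₂⁆ = x * b₁ * b₂ - x * b₂ * b₁ := by
        rw [Ring.lie_def]; noncomm_ring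
      rw [expand, map_sub, h2n (x * b₁), h1n (x * b₂), h1n x, h2n x, keyN, Ring.lie_def]
      noncomm_ring

lemma freeLie_le_master : freeLie k n ≤ master k n := by
  rw [freeLie, LieSubalgebra.lieSpan_le]
  rintro y ⟨v, rfl⟩
  refine ⟨epsA_ι k n v, by rw [Th_ι, Nn_ι], fun x => ?_, fun x => ?_⟩
  · rw [Th_mul_ι, Th_ι]
  · rw [Nn_mul_ι, Nn_ι]

lemma Th_eq_Nn {b : TensorAlgebra k (Fin n → k)} (hb : b ∈ freeLie k n) :
    Th k n b = Nn k n b :=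
  (freeLie_le_master k n hb).2.1

lemma Nn_list (l : List (Fin n → k)) :
    Nn k n ((l.map (TensorAlgebra.ι k)).prod) =
      (l.length : k) • (l.map (TensorAlgebra.ι k)).prod := by
  induction l using List.reverseRecOn with
  | nil =>
    simp only [List.map_nil, List.prod_nil, List.length_nil, Nat.cast_zero, zero_smul]
    exact genMap_one k n _
  | append_singleton l a ih =>
    rw [List.map_append, List.prod_append, List.map_singleton, List.prod_singleton]
    rw [Nn_mul_ι, ih, smul_mul_assoc, List.length_append, List.length_singleton]
    push_cast
    rw [add_smul, one_smul]

lemma Nn_iotaR (r : ℕ) (x : TP k n r) :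
    Nn k n (iotaR k n r x) = (r : k) • iotaR k n r x := by
  have h : (Nn k n) ∘ₗ iotaR k n r = (r : k) • iotaR k n r := by
    apply PiTensorProduct.ext
    apply MultilinearMap.ext
    intro f
    simp only [LinearMap.compMultilinearMap_apply, LinearMap.coe_comp, Function.comp_apply,
      LinearMap.smul_apply]
    simp only [iotaR, TensorPower.toTensorAlgebra_tprod, TensorAlgebra.tprod_apply]
    rw [show (List.ofFn fun i => (TensorAlgebra.ι k) (f i)) = (List.ofFn f).map (TensorAlgebra.ι k)
      from by rw [List.map_ofFn]; rfl, Nn_list]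
    simp
  exact LinearMap.congr_fun h x

lemma iotaR_comp_toDirectSum (r : ℕ) :
    (TensorAlgebra.toDirectSum (M := Fin n → k)).toLinearMap ∘ₗ iotaR k n r =
      DirectSum.lof k ℕ (fun i => TensorPower k i (Fin n → k)) r := by
  apply PiTensorProduct.ext
  apply MultilinearMap.ext
  intro f
  simp only [LinearMap.compMultilinearMap_apply, LinearMap.coe_comp, Function.comp_apply,
    AlgHom.toLinearMap_apply]
  rw [iotaR, TensorPower.toTensorAlgebra_tprod, TensorAlgebra.toDirectSum_tensorPower_tprod,
    DirectSum.lof_eq_of]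

lemma iotaR_injective (r : ℕ) : Function.Injective (iotaR k n r) := by
  intro x y h
  have h2 := congrArg (TensorAlgebra.toDirectSum (M := Fin n → k)) h
  have hx := LinearMap.congr_fun (iotaR_comp_toDirectSum k n r) x
  have hy := LinearMap.congr_fun (iotaR_comp_toDirectSum k n r) y
  simp only [LinearMap.coe_comp, Function.comp_apply, AlgHom.toLinearMap_apply] at hx hy
  rw [hx, hy] at h2
  simpa using DirectSum.of_injective (β := fun i => TensorPower k i (Fin n → k)) r
    (by simpa [DirectSum.lof_eq_of] using h2)

/- ### The right action : basic lemmas -/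

lemma ract_one (r : ℕ) : ract k n r 1 = 1 := by
  simp [ract, map_one]

lemma ract_of (r : ℕ) (σ : Equiv.Perm (Fin r)) :
    ract k n r (MonoidAlgebra.of k _ σ) = permAct k n r σ := by
  rw [ract, rho, MonoidAlgebra.lift_of]
  rfl

lemma ract_smul (r : ℕ) (c : k) (x : MonoidAlgebra k (Equiv.Perm (Fin r))) :
    ract k n r (c • x) = c • ract k n r x := by
  simp [ract, map_smul]

lemma ract_sub (r : ℕ) (x y : MonoidAlgebra k (Equiv.Perm (Fin r))) :
    ract k n r (x - y) = ract k n r x - ract k n r y := by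
  simp [ract, map_sub]

lemma ract_add (r : ℕ) (x y : MonoidAlgebra k (Equiv.Perm (Fin r))) :
    ract k n r (x + y) = ract k n r x + ract k n r y := by
  simp [ract, map_add]

/- ### Faithfulness of the right action on `(k^r)^{⊗r}` -/

def deltaB (r : ℕ) : Fin r → Fin r → k := fun i j => if i = j then 1 else 0

lemma ract_faithful (r : ℕ) (x : MonoidAlgebra k (Equiv.Perm (Fin r)))
    (h : ract k r r x = 0) : x = 0 := by
  have key : ∀ (y : MonoidAlgebra k (Equiv.Perm (Fin r))) (τ : Equiv.Perm (Fin r)),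
      PiTensorProduct.lift ((MultilinearMap.mkPiAlgebra k (Fin r) k).compLinearMap
          (fun i => LinearMap.proj (τ i)))
        (ract k r r y (PiTensorProduct.tprod k (deltaB k r))) = y.coeff τ := by
    intro y τ
    induction y using MonoidAlgebra.induction_linear with
    | zero =>
      have h0 : ract k r r (0 : MonoidAlgebra k (Equiv.Perm (Fin r))) = 0 := by
        simp [ract]
      rw [h0, LinearMap.zero_apply, map_zero]
      simp
    | add f g hf hg =>
      rw [ract_add, LinearMap.add_apply, map_add, hf, hg]
      rfl
    | single σ c =>
      have hs : (MonoidAlgebra.single σ c : MonoidAlgebra k (Equiv.Perm (Fin r)))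
          = c • MonoidAlgebra.of k (Equiv.Perm (Fin r)) σ := by
        rw [MonoidAlgebra.of_apply, MonoidAlgebra.smul_single', mul_one]
      rw [hs, ract_smul, LinearMap.smul_apply, ract_of, permAct_tprod, map_smul,
        PiTensorProduct.lift.tprod]
      simp only [MultilinearMap.compLinearMap_apply, MultilinearMap.mkPiAlgebra_apply,
        LinearMap.proj_apply, Function.comp_apply, smul_eq_mul]
      rw [MonoidAlgebra.coeff_smul_apply, MonoidAlgebra.of_apply, MonoidAlgebra.coeff_single,
          Finsupp.single_apply, smul_eq_mul]
      by_cases hστ : σ = τ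
      · subst hστ
        simp [deltaB]
      · have hex : ∃ i, σ i ≠ τ i := by
          by_contra hc
          push_neg at hc
          exact hστ (Equiv.ext hc)
        obtain ⟨i, hi⟩ := hex
        rw [Finset.prod_eq_zero (Finset.mem_univ i) (by simp [deltaB, hi]), if_neg hστ]
  apply MonoidAlgebra.ext
  apply Finsupp.ext
  intro τ
  have h3 := key x τ
  rw [h, LinearMap.zero_apply, map_zero] at h3
  exact h3.symm

/- ### The Dynkin–Specht–Wever element: combinatorial analysis -/

def factorEl (r : ℕ) (i : Fin r) : MonoidAlgebra k (Equiv.Perm (Fin r)) :=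
  1 - MonoidAlgebra.of k (Equiv.Perm (Fin r)) ((Fin.cycleRange i)⁻¹)

def omegaEl (r : ℕ) : MonoidAlgebra k (Equiv.Perm (Fin r)) :=
  (((List.finRange r).drop 1).map (factorEl k r)).prod

lemma dsw_eq (r : ℕ) : dsw k r = (r : k)⁻¹ • omegaEl k r := rfl

def omegaPart (r j : ℕ) : MonoidAlgebra k (Equiv.Perm (Fin r)) :=
  ((((List.finRange r).drop 1).take j).map (factorEl k r)).prod

lemma omegaPart_zero (r : ℕ) : omegaPart k r 0 = 1 := by simp [omegaPart]

lemma omegaPart_succ (m j : ℕ) (hj : j < m) :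
    omegaPart k (m+1) (j+1) = omegaPart k (m+1) j * factorEl k (m+1) ⟨j+1, by omega⟩ := by
  have hlen : ((List.finRange (m+1)).drop 1).length = m := by simp
  rw [omegaPart, List.take_succ,
    List.getElem?_eq_getElem (by omega : j < ((List.finRange (m+1)).drop 1).length),
    List.map_append, List.prod_append]
  congr 1
  have hel : ((List.finRange (m+1)).drop 1)[j]'(by omega) = (⟨j+1, by omega⟩ : Fin (m+1)) := by
    rw [List.getElem_drop]
    simp only [List.getElem_finRange]
    exact Fin.ext (by simp only [Fin.coe_cast]; omega)
  rw [hel]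
  simp only [Option.toList_some, List.map_cons, List.map_nil, List.prod_cons, List.prod_nil,
    mul_one]

lemma omegaPart_last (m : ℕ) : omegaPart k (m+1) m = omegaEl k (m+1) := by
  have hlen : ((List.finRange (m+1)).drop 1).length = m := by simp
  rw [omegaPart, omegaEl, List.take_of_length_le (by omega)]

lemma ract_factor (r : ℕ) (i : Fin r) :
    ract k n r (factorEl k r i) = 1 - permAct k n r ((Fin.cycleRange i)⁻¹) := by
  rw [factorEl, ract_sub, ract_one, ract_of]

/- ### Extension of tensors with a fixed tail -/

def extFun (m : ℕ) (f : Fin (m+1) → (Fin n → k)) (j : ℕ) (g : Fin (j+1) → (Fin n → k)) :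
    Fin (m+1) → (Fin n → k) :=
  fun i => if h : (i : ℕ) < j + 1 then g ⟨i, h⟩ else f i

lemma extFun_update (m : ℕ) (f : Fin (m+1) → (Fin n → k)) (j : ℕ) (hj : j ≤ m)
    (g : Fin (j+1) → (Fin n → k)) (a : Fin (j+1)) (z : Fin n → k) :
    extFun k n m f j (Function.update g a z) =
      Function.update (extFun k n m f j g) (Fin.castLE (by omega) a) z := by
  funext i
  rw [Function.update_apply]
  by_cases hi : (i : ℕ) < j + 1
  · simp only [extFun, dif_pos hi, Function.update_apply]
    by_cases he : (i : ℕ) = (a : ℕ)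
    · rw [if_pos (Fin.ext he : (⟨(i : ℕ), hi⟩ : Fin (j+1)) = a),
        if_pos (Fin.ext he : i = Fin.castLE (by omega) a)]
    · rw [if_neg (fun hc => he (congrArg Fin.val hc) : ¬ (⟨(i : ℕ), hi⟩ : Fin (j+1)) = a),
        if_neg (fun hc => he (congrArg Fin.val hc) : ¬ i = Fin.castLE (by omega) a)]
  · have hne : ¬ i = Fin.castLE (by omega : j + 1 ≤ m + 1) a := by
      intro hc
      apply hi
      rw [hc]
      simpa using a.isLt
    simp only [extFun, dif_neg hi, if_neg hne]

def extMul (m : ℕ) (f : Fin (m+1) → (Fin n → k)) (j : ℕ) (hj : j ≤ m) :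
    MultilinearMap k (fun _ : Fin (j+1) => (Fin n → k)) (TP k n (m+1)) where
  toFun g := PiTensorProduct.tprod k (extFun k n m f j g)
  map_update_add' := by
    intro dec g a x y
    cases Subsingleton.elim dec (instDecidableEqFin (j+1))
    simp only [extFun_update k n m f j hj]
    exact MultilinearMap.map_update_add _ _ _ _ _
  map_update_smul' := by
    intro dec g a c x
    cases Subsingleton.elim dec (instDecidableEqFin (j+1))
    simp only [extFun_update k n m f j hj]
    exact MultilinearMap.map_update_smul _ _ _ _ _

def Psi (m : ℕ) (f : Fin (m+1) → (Fin n → k)) (j : ℕ) (hj : j ≤ m) :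
    TP k n (j+1) →ₗ[k] TP k n (m+1) :=
  PiTensorProduct.lift (extMul k n m f j hj)

lemma Psi_tprod (m : ℕ) (f : Fin (m+1) → (Fin n → k)) (j : ℕ) (hj : j ≤ m)
    (g : Fin (j+1) → (Fin n → k)) :
    Psi k n m f j hj (PiTensorProduct.tprod k g) =
      PiTensorProduct.tprod k (extFun k n m f j g) := by
  rw [Psi, PiTensorProduct.lift.tprod]
  rfl

/- ### cons and snoc as linear maps on tensor powers -/

def consMul (q : ℕ) (a : Fin n → k) :
    MultilinearMap k (fun _ : Fin q => (Fin n → k)) (TP k n (q+1)) where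
  toFun g := PiTensorProduct.tprod k (Fin.cons a g)
  map_update_add' := by
    intro dec g i x y
    cases Subsingleton.elim dec (instDecidableEqFin q)
    simp only [Fin.cons_update]
    exact MultilinearMap.map_update_add _ _ _ _ _
  map_update_smul' := by
    intro dec g i c x
    cases Subsingleton.elim dec (instDecidableEqFin q)
    simp only [Fin.cons_update]
    exact MultilinearMap.map_update_smul _ _ _ _ _

def snocMul (q : ℕ) (a : Fin n → k) :
    MultilinearMap k (fun _ : Fin q => (Fin n → k)) (TP k n (q+1)) where
  toFun g := PiTensorProduct.tprod k (Fin.snoc g a)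
  map_update_add' := by
    intro dec g i x y
    cases Subsingleton.elim dec (instDecidableEqFin q)
    simp only [Fin.snoc_update]
    exact MultilinearMap.map_update_add _ _ _ _ _
  map_update_smul' := by
    intro dec g i c x
    cases Subsingleton.elim dec (instDecidableEqFin q)
    simp only [Fin.snoc_update]
    exact MultilinearMap.map_update_smul _ _ _ _ _

def consL (q : ℕ) (a : Fin n → k) : TP k n q →ₗ[k] TP k n (q+1) :=
  PiTensorProduct.lift (consMul k n q a)

def snocL (q : ℕ) (a : Fin n → k) : TP k n q →ₗ[k] TP k n (q+1) :=
  PiTensorProduct.lift (snocMul k n q a)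

lemma consL_tprod (q : ℕ) (a : Fin n → k) (g : Fin q → (Fin n → k)) :
    consL k n q a (PiTensorProduct.tprod k g) = PiTensorProduct.tprod k (Fin.cons a g) := by
  rw [consL, PiTensorProduct.lift.tprod]; rfl

lemma snocL_tprod (q : ℕ) (a : Fin n → k) (g : Fin q → (Fin n → k)) :
    snocL k n q a (PiTensorProduct.tprod k g) = PiTensorProduct.tprod k (Fin.snoc g a) := by
  rw [snocL, PiTensorProduct.lift.tprod]; rfl

lemma iota_consL (q : ℕ) (a : Fin n → k) :
    (iotaR k n (q+1)) ∘ₗ consL k n q a =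
      (LinearMap.mulLeft k (TensorAlgebra.ι k a)) ∘ₗ iotaR k n q := by
  apply PiTensorProduct.ext
  apply MultilinearMap.ext
  intro g
  simp only [LinearMap.compMultilinearMap_apply, LinearMap.coe_comp, Function.comp_apply]
  rw [consL_tprod]
  simp only [iotaR, TensorPower.toTensorAlgebra_tprod, TensorAlgebra.tprod_apply,
    LinearMap.mulLeft_apply]
  rw [List.ofFn_succ, List.prod_cons]
  simp [Fin.cons_zero, Fin.cons_succ]

lemma iota_snocL (q : ℕ) (a : Fin n → k) :
    (iotaR k n (q+1)) ∘ₗ snocL k n q a =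
      (LinearMap.mulRight k (TensorAlgebra.ι k a)) ∘ₗ iotaR k n q := by
  apply PiTensorProduct.ext
  apply MultilinearMap.ext
  intro g
  simp only [LinearMap.compMultilinearMap_apply, LinearMap.coe_comp, Function.comp_apply]
  rw [snocL_tprod]
  simp only [iotaR, TensorPower.toTensorAlgebra_tprod, TensorAlgebra.tprod_apply,
    LinearMap.mulRight_apply]
  rw [List.ofFn_succ', List.prod_concat]
  simp [Fin.snoc_castSucc, Fin.snoc_last]

/- ### The key recursions for Psi -/

lemma Psi_last (m : ℕ) (f : Fin (m+1) → (Fin n → k)) :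
    Psi k n m f m le_rfl = LinearMap.id := by
  apply PiTensorProduct.ext
  apply MultilinearMap.ext
  intro g
  simp only [LinearMap.compMultilinearMap_apply, LinearMap.id_coe, id_eq]
  rw [Psi_tprod]
  congr 1
  funext i
  have hi : (i : ℕ) < m + 1 := i.isLt
  simp only [extFun, dif_pos hi]

lemma Psi_snoc (m : ℕ) (f : Fin (m+1) → (Fin n → k)) (j : ℕ) (hj : j + 1 ≤ m) :
    Psi k n m f j (by omega) =
      (Psi k n m f (j+1) hj) ∘ₗ snocL k n (j+1) (f ⟨j+1, by omega⟩) := by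
  apply PiTensorProduct.ext
  apply MultilinearMap.ext
  intro g
  simp only [LinearMap.compMultilinearMap_apply, LinearMap.coe_comp, Function.comp_apply]
  rw [Psi_tprod, snocL_tprod, Psi_tprod]
  congr 1
  funext i
  by_cases hi : (i : ℕ) < j + 1
  · have hi2 : (i : ℕ) < j + 2 := by omega
    simp only [extFun, dif_pos hi, dif_pos hi2, Fin.snoc, dif_pos hi]
    rfl
  · by_cases hieq : (i : ℕ) = j + 1
    · have hi2 : (i : ℕ) < j + 2 := by omega
      simp only [extFun, dif_neg hi, dif_pos hi2]
      have hlast : (⟨(i : ℕ), hi2⟩ : Fin (j+2)) = Fin.last (j+1) :=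
        Fin.ext (by show (i : ℕ) = j + 1; omega)
      rw [hlast, Fin.snoc_last]
      exact congrArg f (Fin.ext (by show (i : ℕ) = j + 1; omega))
    · have hi2 : ¬ ((i : ℕ) < j + 2) := by omega
      simp only [extFun, dif_neg hi, dif_neg hi2]

lemma Psi_cons (m : ℕ) (f : Fin (m+1) → (Fin n → k)) (j : ℕ) (hj : j + 1 ≤ m) :
    (permAct k n (m+1) ((Fin.cycleRange (⟨j+1, by omega⟩ : Fin (m+1)))⁻¹)) ∘ₗ
        Psi k n m f j (by omega) =
      (Psi k n m f (j+1) hj) ∘ₗ consL k n (j+1) (f ⟨j+1, by omega⟩) := by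
  apply PiTensorProduct.ext
  apply MultilinearMap.ext
  intro g
  simp only [LinearMap.compMultilinearMap_apply, LinearMap.coe_comp, Function.comp_apply]
  rw [Psi_tprod, consL_tprod, Psi_tprod, permAct_tprod]
  set p : Fin (m+1) := ⟨j+1, by omega⟩ with hp
  congr 1
  funext i
  by_cases h0 : (i : ℕ) = 0
  · have hi0 : i = 0 := Fin.ext h0
    subst hi0
    have hγ : (Fin.cycleRange p)⁻¹ 0 = p := by
      rw [← Fin.cycleRange_self p, Equiv.Perm.inv_def, Equiv.symm_apply_apply]
    have hp1 : ¬ ((p : ℕ) < j + 1) := by simp [hp]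
    have h02 : (((0 : Fin (m+1))) : ℕ) < j + 2 := by simp
    simp only [Function.comp_apply, hγ, extFun, dif_neg hp1, dif_pos h02]
    have hz : (⟨(((0 : Fin (m+1))) : ℕ), h02⟩ : Fin (j+2)) = 0 := Fin.ext (by simp)
    rw [hz, Fin.cons_zero]
  · by_cases hi : (i : ℕ) < j + 2
    · -- 1 ≤ i ≤ j+1 : γ i = i - 1
      have h1 : 1 ≤ (i : ℕ) := by omega
      have hlt : (⟨(i : ℕ) - 1, by omega⟩ : Fin (m+1)) < p := by
        rw [Fin.lt_def]
        simp only [hp]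
        omega
      set q : Fin (m+1) := ⟨(i : ℕ) - 1, by omega⟩ with hq
      have hcr2 : Fin.cycleRange p q = i := by
        apply Fin.ext
        rw [Fin.coe_cycleRange_of_lt hlt]
        show (i : ℕ) - 1 + 1 = (i : ℕ)
        omega
      have hγ : (Fin.cycleRange p)⁻¹ i = q := by
        rw [← hcr2, Equiv.Perm.inv_def, Equiv.symm_apply_apply]
      have hd : ((q : ℕ)) < j + 1 := by
        simp only [hq]
        omega
      simp only [Function.comp_apply, hγ, extFun, dif_pos hd, dif_pos hi]
      have hsucc : (⟨(i : ℕ), hi⟩ : Fin (j+2)) = Fin.succ ⟨(q : ℕ), hd⟩ := by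
        apply Fin.ext
        show (i : ℕ) = (q : ℕ) + 1
        simp only [hq]
        omega
      rw [hsucc, Fin.cons_succ]
      exact congrArg g (Fin.ext (by show (↑((Fin.cycleRange p)⁻¹ i) : ℕ) = ↑q; rw [hγ]))
    · -- i > j+1 : γ i = i
      have hgt : p < i := by
        rw [Fin.lt_def]
        simp only [hp]
        omega
      have hγ : (Fin.cycleRange p)⁻¹ i = i := by
        conv_lhs => rw [← Fin.cycleRange_of_gt hgt]
        rw [Equiv.Perm.inv_def, Equiv.symm_apply_apply]
      have hd : ¬ ((i : ℕ) < j + 1) := by omega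
      simp only [Function.comp_apply, hγ, extFun, dif_neg hd, dif_neg hi]

/- ### head words -/

def hwd (m : ℕ) (f : Fin (m+1) → (Fin n → k)) (j : ℕ) (hj : j ≤ m) :
    TensorAlgebra k (Fin n → k) :=
  (List.ofFn (fun i : Fin (j+1) => TensorAlgebra.ι k (f (Fin.castLE (by omega) i)))).prod

lemma hwd_succ (m : ℕ) (f : Fin (m+1) → (Fin n → k)) (j : ℕ) (hj : j + 1 ≤ m) :
    hwd k n m f (j+1) hj =
      hwd k n m f j (by omega) * TensorAlgebra.ι k (f ⟨j+1, by omega⟩) := by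
  rw [hwd, List.ofFn_succ', List.prod_concat, hwd]
  rfl

lemma epsA_hwd (m : ℕ) (f : Fin (m+1) → (Fin n → k)) (j : ℕ) (hj : j ≤ m) :
    epsA k n (hwd k n m f j hj) = 0 := by
  rw [hwd, List.ofFn_succ, List.prod_cons, map_mul, epsA_ι, zero_mul]

lemma hwd_zero (m : ℕ) (f : Fin (m+1) → (Fin n → k)) (hj : 0 ≤ m) :
    hwd k n m f 0 hj = TensorAlgebra.ι k (f 0) := by
  rw [hwd, List.ofFn_succ, List.ofFn_zero, List.prod_cons, List.prod_nil, mul_one]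
  exact congrArg (TensorAlgebra.ι k) (congrArg f (Fin.ext rfl))

lemma hwd_last (m : ℕ) (f : Fin (m+1) → (Fin n → k)) :
    hwd k n m f m le_rfl = iotaR k n (m+1) (PiTensorProduct.tprod k f) := by
  rw [iotaR, TensorPower.toTensorAlgebra_tprod, TensorAlgebra.tprod_apply, hwd]
  rfl

/- ### the main induction -/

lemma main_aux (m : ℕ) (f : Fin (m+1) → (Fin n → k)) :
    ∀ (j : ℕ) (hj : j ≤ m),
      ∃ w : TP k n (j+1),
        ract k n (m+1) (omegaPart k (m+1) j) (PiTensorProduct.tprod k f) =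
          Psi k n m f j hj w ∧
        iotaR k n (j+1) w = Th k n (hwd k n m f j hj) := by
  intro j
  induction j with
  | zero =>
    intro hj
    refine ⟨PiTensorProduct.tprod k (fun _ : Fin 1 => f 0), ?_, ?_⟩
    · rw [omegaPart_zero, ract_one, Module.End.one_apply, Psi_tprod]
      congr 1
      funext i
      by_cases hi : (i : ℕ) < 1
      · simp only [extFun, dif_pos hi]
        exact (congrArg f (Fin.ext (by simp only [Fin.val_zero]; omega))).symm
      · simp only [extFun, dif_neg hi]
    · rw [hwd_zero, Th_ι, iotaR, TensorPower.toTensorAlgebra_tprod,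
        TensorAlgebra.tprod_apply, List.ofFn_succ, List.ofFn_zero, List.prod_cons,
        List.prod_nil, mul_one]
  | succ j ih =>
    intro hj1
    obtain ⟨w, h1, h2⟩ := ih (by omega)
    refine ⟨snocL k n (j+1) (f ⟨j+1, by omega⟩) w - consL k n (j+1) (f ⟨j+1, by omega⟩) w,
      ?_, ?_⟩
    · rw [omegaPart_succ k m j (by omega), ract_mul, Module.End.mul_apply, h1, ract_factor,
        LinearMap.sub_apply, Module.End.one_apply]
      have e1 := LinearMap.congr_fun (Psi_snoc k n m f j hj1) w
      have e2 := LinearMap.congr_fun (Psi_cons k n m f j hj1) w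
      simp only [LinearMap.coe_comp, Function.comp_apply] at e1 e2
      rw [map_sub, ← e1, ← e2]
    · rw [map_sub]
      have s1 := LinearMap.congr_fun (iota_snocL k n (j+1) (f ⟨j+1, by omega⟩)) w
      have s2 := LinearMap.congr_fun (iota_consL k n (j+1) (f ⟨j+1, by omega⟩)) w
      simp only [LinearMap.coe_comp, Function.comp_apply, LinearMap.mulLeft_apply,
        LinearMap.mulRight_apply] at s1 s2
      rw [s1, s2, h2, hwd_succ k n m f j hj1, Th_mul_ι, epsA_hwd, zero_smul, add_zero,
        Ring.lie_def]

/- ### the glue lemma -/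

lemma glue (m : ℕ) :
    (iotaR k n (m+1)) ∘ₗ ract k n (m+1) (omegaEl k (m+1)) = (Th k n) ∘ₗ iotaR k n (m+1) := by
  apply PiTensorProduct.ext
  apply MultilinearMap.ext
  intro f
  simp only [LinearMap.compMultilinearMap_apply, LinearMap.coe_comp, Function.comp_apply]
  obtain ⟨w, h1, h2⟩ := main_aux k n m f m le_rfl
  rw [← omegaPart_last k m, h1, Psi_last, LinearMap.id_apply]
  rw [h2, hwd_last]

lemma ract_omega_mem (m : ℕ) (x : TP k n (m+1)) :
    ract k n (m+1) (omegaEl k (m+1)) x ∈ Lnr k n (m+1) := by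
  have hg := LinearMap.congr_fun (glue k n m) x
  simp only [LinearMap.coe_comp, Function.comp_apply] at hg
  simp only [Lnr, Submodule.mem_comap]
  rw [hg]
  exact Th_mem_freeLie k n _

lemma ract_omega_eq (m : ℕ) (x : TP k n (m+1)) (hx : x ∈ Lnr k n (m+1)) :
    ract k n (m+1) (omegaEl k (m+1)) x = ((m+1 : ℕ) : k) • x := by
  apply iotaR_injective k n (m+1)
  rw [map_smul]
  have hg := LinearMap.congr_fun (glue k n m) x
  simp only [LinearMap.coe_comp, Function.comp_apply] at hg
  rw [hg, Th_eq_Nn k n (by simpa [Lnr, Submodule.mem_comap] using hx), Nn_iotaR]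

end DSWAux

/-- if `char k ∤ r` then the Dynkin-Specht-Wever element is a Lie
idempotent: `e_r² = e_r` and `T^{n,r}·e_r = L^{n,r}`. -/
theorem statement_0 (k : Type*) [Field k] (n r : ℕ) (hn : 0 < n) (hr : 0 < r)
    (hchar : ¬ ((ringChar k : ℕ) ∣ r)) :
    IsIdempotentElem (dsw k r) ∧
    LinearMap.range (ract k n r (dsw k r)) = Lnr k n r := by
  have hrk : (r : k) ≠ 0 := fun h0 => hchar ((ringChar.spec k r).mp h0)
  obtain ⟨m, rfl⟩ : ∃ m, r = m + 1 := ⟨r - 1, by omega⟩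
  constructor
  · have homega : omegaEl k (m+1) * omegaEl k (m+1) = (((m+1 : ℕ)) : k) • omegaEl k (m+1) := by
      have h0 : ract k (m+1) (m+1)
          (omegaEl k (m+1) * omegaEl k (m+1) - (((m+1 : ℕ)) : k) • omegaEl k (m+1)) = 0 := by
        rw [ract_sub, ract_smul, ract_mul]
        apply LinearMap.ext
        intro y
        simp only [LinearMap.sub_apply, LinearMap.smul_apply, Module.End.mul_apply,
          LinearMap.zero_apply]
        rw [ract_omega_eq k (m+1) m _ (ract_omega_mem k (m+1) m y), sub_self]
      exact sub_eq_zero.mp (ract_faithful k (m+1) _ h0)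
    show dsw k (m+1) * dsw k (m+1) = dsw k (m+1)
    rw [dsw_eq, smul_mul_assoc, mul_smul_comm, homega, smul_smul, smul_smul]
    congr 1
    field_simp
  · apply le_antisymm
    · rintro y hy
      obtain ⟨x, rfl⟩ := hy
      rw [dsw_eq, ract_smul, LinearMap.smul_apply]
      exact Submodule.smul_mem _ _ (ract_omega_mem k n m x)
    · intro x hx
      refine LinearMap.mem_range.mpr ⟨x, ?_⟩
      rw [dsw_eq, ract_smul, LinearMap.smul_apply, ract_omega_eq k n m x hx, smul_smul,
        inv_mul_cancel₀ hrk, one_smul]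
end

section
/- Suppose k has cardinality strictly larger than r, the characteristic of k does not divide r, and k contains a primitive r-th root of unity. If e and e′ are Lie idempotents in kΣ_r, then the triple (k GL_n(k), L^{n,r}, e kΣ_r e) satisfies Schur–Weyl duality if and only if the triple (k GL_n(k), L^{n,r}, e′ kΣ_r e′) does. -/
open MulOpposite

noncomputable section

attribute [local instance 100] LieRing.ofAssociativeRing

variable (k : Type*) [Field k] (n r : ℕ)

end


lemma ract_id_on_Lnr (k : Type*) [Field k] (n r : ℕ)
    (e : MonoidAlgebra k (Equiv.Perm (Fin r)))
    (he : IsIdempotentElem e)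
    (hLie : LinearMap.range (ract k n r e) = Lnr k n r)
    (x : TP k n r) (hx : x ∈ Lnr k n r) : ract k n r e x = x := by
  rw [← hLie] at hx
  obtain ⟨y, rfl⟩ := hx
  have h := ract_mul k n r e e
  rw [he] at h
  have := congrArg (fun F : Module.End k (TP k n r) => F y) h
  simpa [Module.End.mul_apply] using this.symm

lemma psiRes_eq (k : Type*) [Field k] (n r : ℕ)
    (e e' : MonoidAlgebra k (Equiv.Perm (Fin r)))
    (he' : IsIdempotentElem e')
    (hLie : LinearMap.range (ract k n r e) = Lnr k n r)
    (hLie' : LinearMap.range (ract k n r e') = Lnr k n r)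
    (b : MonoidAlgebra k (Equiv.Perm (Fin r))) :
    psiRes k n r e hLie b = psiRes k n r e' hLie' (e * b * e) := by
  apply LinearMap.ext
  intro x
  apply Subtype.ext
  show ract k n r (e * b * e) (x : TP k n r)
      = ract k n r (e' * (e * b * e) * e') (x : TP k n r)
  have hx : ract k n r e' (x : TP k n r) = x :=
    ract_id_on_Lnr k n r e' he' hLie' x x.2
  have hmem : ract k n r (e * b * e) (x : TP k n r) ∈ Lnr k n r := by
    have h1 : ract k n r (e * b * e) (x : TP k n r)
        = ract k n r e (ract k n r (e * b) (x : TP k n r)) := by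
      rw [show e * b * e = (e * b) * e from rfl, ract_mul k n r (e * b) e]
      rfl
    rw [h1]
    exact hLie.le (LinearMap.mem_range_self _ _)
  have hx2 : ract k n r e' (ract k n r (e * b * e) (x : TP k n r))
      = ract k n r (e * b * e) (x : TP k n r) :=
    ract_id_on_Lnr k n r e' he' hLie' _ hmem
  rw [ract_mul k n r (e' * (e * b * e)) e', ract_mul k n r e' (e * b * e)]
  simp only [Module.End.mul_apply, hx, hx2]

lemma swd_sets_eq (k : Type*) [Field k] (n r : ℕ)
    (e e' : MonoidAlgebra k (Equiv.Perm (Fin r)))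
    (he : IsIdempotentElem e) (he' : IsIdempotentElem e')
    (hLie : LinearMap.range (ract k n r e) = Lnr k n r)
    (hLie' : LinearMap.range (ract k n r e') = Lnr k n r) :
    EndeBe k n r e hLie = EndeBe k n r e' hLie' ∧
    Set.range (psiRes k n r e hLie) = Set.range (psiRes k n r e' hLie') := by
  constructor
  · ext f
    constructor
    · intro hf b
      rw [psiRes_eq k n r e' e he hLie' hLie b]
      exact hf _
    · intro hf b
      rw [psiRes_eq k n r e e' he' hLie hLie' b]
      exact hf _
  · apply Set.eq_of_subset_of_subset
    · rintro _ ⟨b, rfl⟩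
      exact ⟨e * b * e, (psiRes_eq k n r e e' he' hLie hLie' b).symm⟩
    · rintro _ ⟨b, rfl⟩
      exact ⟨e' * b * e', (psiRes_eq k n r e' e he hLie' hLie b).symm⟩

/-- if `|k| > r`, `char k ∤ r` and `k` contains a primitive `r`-th root
of unity, then for Lie idempotents `e, e\'`, the triple
`(k GL_n(k), L^{n,r}, e kΣ_r e)` satisfies Schur-Weyl duality iff
`(k GL_n(k), L^{n,r}, e\' kΣ_r e\')` does. -/
theorem statement_14 (k : Type*) [Field k] (n r : ℕ) (hn : 0 < n) (hr : 0 < r)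
    (hcard : (r : Cardinal) < Cardinal.mk k)
    (hchar : ¬ ((ringChar k : ℕ) ∣ r))
    (ζ : k) (hζ : IsPrimitiveRoot ζ r)
    (e e' : MonoidAlgebra k (Equiv.Perm (Fin r)))
    (he : IsIdempotentElem e) (he' : IsIdempotentElem e')
    (hLie : LinearMap.range (ract k n r e) = Lnr k n r)
    (hLie' : LinearMap.range (ract k n r e') = Lnr k n r) :
    LieSWD k n r e hLie ↔ LieSWD k n r e' hLie' := by
  obtain ⟨h1, h2⟩ := swd_sets_eq k n r e e' he he' hLie hLie'
  unfold LieSWD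
  rw [h1, h2]
end
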